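/- For the ε-family, the function ψ(x,y) = C·√(S(x,y)) with S = 4(1−εx) − ε²y² satisfies the real weight system ψ_x = A_y·ψ and ψ_y = B_y·ψ on {S > 0, 1−εx ≠ 0}, where A_y = (βα_y − 2αβ_y)/Δ and B_y = (2α_y − ββ_y)/Δ with α = 1/(1−εx), β = εy/(1−εx), Δ = 4α − β². -/

import Mathlib

/-- Partial derivative in the `x`-direction. -/
noncomputable def pdx {E : Type*} [NormedAddCommGroup E] [NormedSpace ℝ E]
    (f : ℝ × ℝ → E) (z : ℝ × ℝ) : E := fderiv ℝ f z (1, 0)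

/-- Partial derivative in the `y`-direction. -/
noncomputable def pdy {E : Type*} [NormedAddCommGroup E] [NormedSpace ℝ E]
    (f : ℝ × ℝ → E) (z : ℝ × ℝ) : E := fderiv ℝ f z (0, 1)

/-- For the ε-family, `ψ = C·√S` with `S = 4(1−εx) − ε²y²` satisfies the weight
system `ψ_x = A_y·ψ`, `ψ_y = B_y·ψ` on `{S > 0, 1 − εx ≠ 0}`, where
`A_y = (βα_y − 2αβ_y)/Δ`, `B_y = (2α_y − ββ_y)/Δ`. -/
theorem stmt16 (ε C : ℝ) :
    let α : ℝ × ℝ → ℝ := fun w => 1 / (1 - ε * w.1)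
    let β : ℝ × ℝ → ℝ := fun w => ε * w.2 / (1 - ε * w.1)
    let Δ : ℝ × ℝ → ℝ := fun w => 4 * α w - (β w) ^ 2
    let S : ℝ × ℝ → ℝ := fun w => 4 * (1 - ε * w.1) - ε ^ 2 * w.2 ^ 2
    let ψ : ℝ × ℝ → ℝ := fun w => C * Real.sqrt (S w)
    let Ay : ℝ × ℝ → ℝ := fun w => (β w * pdy α w - 2 * α w * pdy β w) / Δ w
    let By : ℝ × ℝ → ℝ := fun w => (2 * pdy α w - β w * pdy β w) / Δ w
    ∀ z : ℝ × ℝ, S z > 0 → 1 - ε * z.1 ≠ 0 →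
      pdx ψ z = Ay z * ψ z ∧ pdy ψ z = By z * ψ z := by
  intro α β Δ S ψ Ay By
  rintro ⟨x, y⟩ hS0 hx
  simp only at hS0 hx
  -- derivative of the denominator 1 - ε x
  have hden : HasFDerivAt (fun w : ℝ × ℝ => 1 - ε * w.1)
      (-(ε • ContinuousLinearMap.fst ℝ ℝ ℝ)) (x, y) :=
    ((hasFDerivAt_fst (𝕜 := ℝ) (p := (x, y))).const_mul ε).const_sub 1
  -- derivative of α
  have hα : HasFDerivAt α
      ((-((1 - ε * x) ^ 2)⁻¹) • (-(ε • ContinuousLinearMap.fst ℝ ℝ ℝ))) (x, y) := by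
    have h := (hasDerivAt_inv hx).comp_hasFDerivAt (x, y) hden
    simpa [α, one_div, Function.comp_def] using h
  -- derivative of β
  have hβ : HasFDerivAt β
      ((ε * y) • ((-((1 - ε * x) ^ 2)⁻¹) • (-(ε • ContinuousLinearMap.fst ℝ ℝ ℝ)))
        + (1 - ε * x)⁻¹ • (ε • ContinuousLinearMap.snd ℝ ℝ ℝ)) (x, y) := by
    have hnum : HasFDerivAt (fun w : ℝ × ℝ => ε * w.2)
        (ε • ContinuousLinearMap.snd ℝ ℝ ℝ) (x, y) :=
      (hasFDerivAt_snd (𝕜 := ℝ) (p := (x, y))).const_mul ε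
    have h := hnum.mul hα
    simpa [β, α, one_div, mul_comm, div_eq_mul_inv, Pi.mul_def] using h
  -- derivative of S
  have hS : HasFDerivAt S
      ((4 : ℝ) • (-(ε • ContinuousLinearMap.fst ℝ ℝ ℝ))
        - (ε ^ 2) • ((2 * y) • ContinuousLinearMap.snd ℝ ℝ ℝ)) (x, y) := by
    have h2 : HasFDerivAt (fun w : ℝ × ℝ => w.2 ^ 2)
        ((2 * y) • ContinuousLinearMap.snd ℝ ℝ ℝ) (x, y) := by
      simpa [Function.comp_def] using (hasDerivAt_pow 2 y).comp_hasFDerivAt (x, y) (hasFDerivAt_snd (𝕜 := ℝ) (p := (x, y)))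
    exact (hden.const_mul 4).sub (h2.const_mul (ε ^ 2))
  -- derivative of ψ
  have hsne : S (x, y) ≠ 0 := ne_of_gt hS0
  have hsqrt := (Real.hasDerivAt_sqrt hsne).comp_hasFDerivAt (x, y) hS
  have hψ := hsqrt.const_mul C
  have hψ' : HasFDerivAt ψ (C • ((1 / (2 * Real.sqrt (S (x, y)))) •
      ((4 : ℝ) • (-(ε • ContinuousLinearMap.fst ℝ ℝ ℝ))
        - (ε ^ 2) • ((2 * y) • ContinuousLinearMap.snd ℝ ℝ ℝ)))) (x, y) := hψ
  -- sqrt facts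
  set s := Real.sqrt (S (x, y)) with hs_def
  have hs_pos : 0 < s := Real.sqrt_pos.mpr hS0
  have hs_ne : s ≠ 0 := ne_of_gt hs_pos
  have hs_sq : s ^ 2 = S (x, y) := Real.sq_sqrt hS0.le
  have hSval : S (x, y) = 4 * (1 - ε * x) - ε ^ 2 * y ^ 2 := rfl
  have hΔ : Δ (x, y) = S (x, y) / (1 - ε * x) ^ 2 := by
    simp only [Δ, α, β, S]
    field_simp
  have hΔne : Δ (x, y) ≠ 0 := by
    rw [hΔ]
    exact div_ne_zero hsne (pow_ne_zero 2 hx)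
  constructor
  · show pdx ψ (x, y) = Ay (x, y) * ψ (x, y)
    simp only [pdx, Ay, pdy, ψ, hψ'.fderiv, hα.fderiv, hβ.fderiv, ← hs_def]
    simp only [ContinuousLinearMap.smul_apply, ContinuousLinearMap.sub_apply,
      ContinuousLinearMap.add_apply, ContinuousLinearMap.neg_apply,
      ContinuousLinearMap.coe_fst', ContinuousLinearMap.coe_snd', smul_eq_mul]
    have hs_sq' : s ^ 2 = 4 * (1 - ε * x) - ε ^ 2 * y ^ 2 := hs_sq
    rw [hΔ, hSval]
    simp only [α, β]
    have hS' : 4 * (1 - ε * x) - ε ^ 2 * y ^ 2 ≠ 0 := hsne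
    field_simp
    linear_combination (4 * ε * C * (1 - ε * x)) * hs_sq'
  · show pdy ψ (x, y) = By (x, y) * ψ (x, y)
    simp only [pdy, By, ψ, hψ'.fderiv, hα.fderiv, hβ.fderiv, ← hs_def]
    simp only [ContinuousLinearMap.smul_apply, ContinuousLinearMap.sub_apply,
      ContinuousLinearMap.add_apply, ContinuousLinearMap.neg_apply,
      ContinuousLinearMap.coe_fst', ContinuousLinearMap.coe_snd', smul_eq_mul]
    have hs_sq' : s ^ 2 = 4 * (1 - ε * x) - ε ^ 2 * y ^ 2 := hs_sq
    rw [hΔ, hSval]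
    simp only [α, β]
    have hS' : 4 * (1 - ε * x) - ε ^ 2 * y ^ 2 ≠ 0 := hsne
    field_simp
    linear_combination (2 * C * ε ^ 2 * y * (1 - ε * x)) * hs_sq'
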